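/- Let A be a commutative K-algebra and let ⟨A,A⟩ = (A⊗A)/S where S is spanned by all a⊗b + b⊗a and ab⊗c + bc⊗a + ca⊗b. Then for any invertible f ∈ A and all integers m, n one has ⟨fᵐ, fⁿ⟩ = m·δ_{m+n,0}·⟨f, f⁻¹⟩ in ⟨A,A⟩. -/

import Mathlib

open TensorProduct

noncomputable section

variable (K : Type*) [Field K] (A : Type*) [CommRing A] [Algebra K A]

/-- The subspace `S ⊆ A ⊗ A` spanned by all `a⊗b + b⊗a` and `ab⊗c + bc⊗a + ca⊗b`. -/
def cycRel : Submodule K (A ⊗[K] A) :=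
  Submodule.span K
    ({x | ∃ a b : A, x = a ⊗ₜ b + b ⊗ₜ a} ∪
     {x | ∃ a b c : A, x = (a*b) ⊗ₜ c + (b*c) ⊗ₜ a + (c*a) ⊗ₜ b})

/-- `⟨A,A⟩ = (A ⊗ A)/S`. -/
abbrev CycPair := (A ⊗[K] A) ⧸ cycRel K A

/-- `⟨a,b⟩`, the class of `a ⊗ b` in `⟨A,A⟩`. -/
def cycPair (a b : A) : CycPair K A := Submodule.Quotient.mk (a ⊗ₜ b)

lemma cycPair_anti (a b : A) : cycPair K A a b + cycPair K A b a = 0 := by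
  have hmem : (a ⊗ₜ[K] b + b ⊗ₜ[K] a : A ⊗[K] A) ∈ cycRel K A :=
    Submodule.subset_span (Or.inl ⟨a, b, rfl⟩)
  have := (Submodule.Quotient.mk_eq_zero (cycRel K A)).2 hmem
  simpa [cycPair, Submodule.Quotient.mk_add] using this

lemma cycPair_cyc (a b c : A) :
    cycPair K A (a*b) c + cycPair K A (b*c) a + cycPair K A (c*a) b = 0 := by
  have hmem : ((a*b) ⊗ₜ[K] c + (b*c) ⊗ₜ[K] a + (c*a) ⊗ₜ[K] b : A ⊗[K] A) ∈ cycRel K A :=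
    Submodule.subset_span (Or.inr ⟨a, b, c, rfl⟩)
  have := (Submodule.Quotient.mk_eq_zero (cycRel K A)).2 hmem
  simpa [cycPair, Submodule.Quotient.mk_add] using this

lemma cycPair_leibniz (a b c : A) :
    cycPair K A (a*b) c = cycPair K A a (b*c) + cycPair K A b (a*c) := by
  have h1 := cycPair_cyc K A a b c
  have h2 := cycPair_anti K A a (b*c)
  have h3 := cycPair_anti K A b (c*a)
  rw [mul_comm c a] at h1 h3
  apply eq_of_sub_eq_zero
  have h4 : cycPair K A (a*b) c - (cycPair K A a (b*c) + cycPair K A b (a*c)) =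
      (cycPair K A (a*b) c + cycPair K A (b*c) a + cycPair K A (a*c) b)
      - (cycPair K A a (b*c) + cycPair K A (b*c) a)
      - (cycPair K A b (a*c) + cycPair K A (a*c) b) := by abel
  rw [h4, h1, h2, h3]
  abel

lemma cycPair_one_right (a : A) : cycPair K A a 1 = 0 := by
  have h1 := cycPair_cyc K A a 1 1
  have h2 := cycPair_anti K A a 1
  simp only [mul_one, one_mul] at h1
  have h3 : cycPair K A a 1 + (cycPair K A a 1 + cycPair K A 1 a) = 0 := by
    rw [← h1]; abel
  rwa [h2, add_zero] at h3

lemma cycPair_one_left (a : A) : cycPair K A 1 a = 0 := by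
  have h := cycPair_anti K A a 1
  rw [cycPair_one_right, zero_add] at h
  exact h

lemma unit_val_mul_zpow (u : Aˣ) (k : ℤ) :
    (u : A) * ((u ^ k : Aˣ) : A) = ((u ^ (k+1) : Aˣ) : A) := by
  rw [← Units.val_mul, mul_comm, ← zpow_add_one]

lemma unit_zpow_mul_zpow (u : Aˣ) (m n : ℤ) :
    ((u ^ m : Aˣ) : A) * ((u ^ n : Aˣ) : A) = ((u ^ (m+n) : Aˣ) : A) := by
  rw [← Units.val_mul, ← zpow_add]

lemma cycPair_key (u : Aˣ) (m n : ℤ) :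
    cycPair K A ((u ^ m : Aˣ) : A) ((u ^ n : Aˣ) : A)
      = m • cycPair K A (u : A) ((u ^ (m + n - 1) : Aˣ) : A) := by
  induction m using Int.induction_on generalizing n with
  | zero => simpa using cycPair_one_left K A ((u ^ n : Aˣ) : A)
  | succ k ih =>
      have hl := cycPair_leibniz K A (u : A) ((u ^ (k:ℤ) : Aˣ) : A) ((u ^ n : Aˣ) : A)
      rw [unit_val_mul_zpow, unit_zpow_mul_zpow, unit_val_mul_zpow] at hl
      have e1 : (k:ℤ) + (n+1) - 1 = (k:ℤ) + n := by ring
      have e2 : ((k:ℤ)+1) + n - 1 = (k:ℤ) + n := by ring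
      rw [hl, ih (n+1), e1, e2, add_smul, one_smul, add_comm]
  | pred k ih =>
      have hl := cycPair_leibniz K A (u : A) ((u ^ (-(k:ℤ)-1) : Aˣ) : A)
        ((u ^ (n-1) : Aˣ) : A)
      rw [unit_val_mul_zpow, unit_zpow_mul_zpow, unit_val_mul_zpow] at hl
      have e0 : -(k:ℤ)-1+1 = -(k:ℤ) := by ring
      have e1 : n - 1 + 1 = n := by ring
      have e2 : -(k:ℤ)-1+(n-1) = -(k:ℤ)+(n-1)-1 := by ring
      rw [e0, e1, e2, ih (n-1)] at hl
      have e3 : -(k:ℤ)-1+n-1 = -(k:ℤ)+(n-1)-1 := by ring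
      rw [e3, sub_smul, one_smul]
      exact eq_sub_of_add_eq' hl.symm

lemma cycPair_c_zero [CharZero K] (u : Aˣ) (k : ℤ) (hk : k ≠ -1) :
    cycPair K A (u : A) ((u ^ k : Aˣ) : A) = 0 := by
  have h1 := cycPair_key K A u 1 k
  have h2 := cycPair_key K A u k 1
  have e1 : (1:ℤ) + k - 1 = k := by ring
  have e2 : k + 1 - 1 = k := by ring
  rw [e1, one_smul] at h1
  rw [e2] at h2
  have h3 := cycPair_anti K A ((u ^ (1:ℤ) : Aˣ) : A) ((u ^ k : Aˣ) : A)
  rw [h1, h2] at h3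
  have h4 : (k + 1) • cycPair K A (u : A) ((u ^ k : Aˣ) : A) = 0 := by
    rw [add_smul, one_smul, add_comm]; exact h3
  have h5 : ((k + 1 : ℤ) : K) • cycPair K A (u : A) ((u ^ k : Aˣ) : A) = 0 := by
    rw [Int.cast_smul_eq_zsmul]; exact h4
  have hne : ((k + 1 : ℤ) : K) ≠ 0 := by
    exact_mod_cast fun h => hk (by omega : k = -1)
  exact (smul_eq_zero.1 h5).resolve_left hne

/-- For any invertible `f` in a commutative `K`-algebra `A` and all integers `m, n`,
one has `⟨fᵐ, fⁿ⟩ = m·δ_{m+n,0}·⟨f, f⁻¹⟩` in `⟨A,A⟩ = (A⊗A)/S`. -/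
theorem cycPair_pow_unit (K : Type*) [Field K] [CharZero K]
    (A : Type*) [CommRing A] [Algebra K A] (f : A) (hf : IsUnit f) (m n : ℤ) :
    cycPair K A (((hf.unit ^ m : Aˣ) : A)) (((hf.unit ^ n : Aˣ) : A)) =
      (if m + n = 0 then m • cycPair K A f (((hf.unit⁻¹ : Aˣ) : A)) else 0) := by
  have hkey := cycPair_key K A hf.unit m n
  by_cases h : m + n = 0
  · rw [if_pos h]
    have e : m + n - 1 = -1 := by omega
    rw [e] at hkey
    rw [hkey, zpow_neg_one, hf.unit_spec]
  · rw [if_neg h]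
    have hz := cycPair_c_zero K A hf.unit (m + n - 1) (by omega)
    rw [hkey, hz, smul_zero]
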